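/- Let d ≥ 2 and let 𝒮 be a weighted step set satisfying the standing assumptions. Let A, Q, B be the Laurent polynomials in z_1,…,z_{d−1} given by A = Σ_{i∈𝒮, i_d=−1} w_i z_1^{i_1}⋯z_{d−1}^{i_{d−1}}, Q and B analogously over i_d = 0 and i_d = 1, and set S̄(z) = z_d A + Q + z_d^{−1} B. For 1 ≤ j ≤ d−1 let B_j be the unique Laurent polynomial in the variables other than z_j with S̄(z) = (z_j + z_j^{−1})·B_j + Q_j, where Q_j does not involve z_j (this exists by symmetry over axis j); set B_d := B. Also define A'_j, A''_j, B'_j, B''_j (Laurent polynomials not involving z_j or z_d) by A = (z_j + z_j^{−1})A'_j + A''_j and B = (z_j + z_j^{−1})B'_j + B''_j. Let p ∈ ℂ^d satisfy p_j ∈ {1,−1} for 1 ≤ j ≤ d−1, A(p_1,…,p_{d−1}) ≠ 0, p_d ≠ 0 and p_d² = B(p_1,…,p_{d−1})/A(p_1,…,p_{d−1}). Define S̃ : ℝ^d → ℂ by S̃(θ) = p_d e^{iθ_d}·A(p_1e^{iθ_1},…,p_{d−1}e^{iθ_{d−1}}) + Q(p_1e^{iθ_1},…,p_{d−1}e^{iθ_{d−1}})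 + p_d^{−1} e^{−iθ_d}·B(p_1e^{iθ_1},…,p_{d−1}e^{iθ_{d−1}}). Then for all 1 ≤ j ≤ k ≤ d: ∂_j S̃(0) = 0; ∂_j∂_k S̃(0) = 0 if j ≠ k; ∂_d² S̃(0) = −2 B(p_1,…,p_{d−1})/p_d; ∂_j² S̃(0) = −2 p_j B_j(p restricted to coordinates ≠ j) for j < d; and for j < d, ∂_d ∂_j² S̃(0) = −2 i p_j ( p_d · A'_j(p restricted to coordinates ≠ j, d) − p_d^{−1} · B'_j(p restricted to coordinates ≠ j, d) ). -/

import Mathlib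

open Finset

/-- The `k`-th partial derivative of a function `f : ℝ^d → ℂ`. -/
noncomputable def pderiv' (d : ℕ) (k : Fin d) (f : (Fin d → ℝ) → ℂ) :
    (Fin d → ℝ) → ℂ :=
  fun z => deriv (fun s : ℝ => f (Function.update z k s)) (z k)

theorem derivatives_of_S_tilde
    (d : ℕ) (hd : 2 ≤ d)
    (S : Finset (Fin d → ℤ)) (w : (Fin d → ℤ) → ℝ)
    -- steps lie in {-1,0,1}^d \ {0}
    (hSsmall : ∀ i ∈ S, (∀ m : Fin d, i m = -1 ∨ i m = 0 ∨ i m = 1) ∧ i ≠ 0)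
    -- nonnegative weights
    (hw : ∀ i ∈ S, 0 ≤ w i)
    -- symmetry of the weighting over each of the first d-1 axes
    (hsym : ∀ j : Fin d, (j : ℕ) < d - 1 → ∀ i ∈ S,
      Function.update i j (-(i j)) ∈ S ∧ w (Function.update i j (-(i j))) = w i)
    -- a positively weighted step forwards and backwards in each coordinate
    (hfb : ∀ j : Fin d, (∃ i ∈ S, i j = 1 ∧ 0 < w i) ∧ (∃ i ∈ S, i j = -1 ∧ 0 < w i))
    -- the Laurent polynomial functions A, Q, B in z_1, …, z_{d-1}
    (AC QC BC : (Fin d → ℂ) → ℂ)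
    (hAC : ∀ z, AC z = ∑ i ∈ S.filter (fun i => i ⟨d - 1, by omega⟩ = -1),
      (w i : ℂ) * ∏ k ∈ Finset.univ.filter (fun k : Fin d => (k : ℕ) < d - 1), z k ^ (i k))
    (hQC : ∀ z, QC z = ∑ i ∈ S.filter (fun i => i ⟨d - 1, by omega⟩ = 0),
      (w i : ℂ) * ∏ k ∈ Finset.univ.filter (fun k : Fin d => (k : ℕ) < d - 1), z k ^ (i k))
    (hBC : ∀ z, BC z = ∑ i ∈ S.filter (fun i => i ⟨d - 1, by omega⟩ = 1),
      (w i : ℂ) * ∏ k ∈ Finset.univ.filter (fun k : Fin d => (k : ℕ) < d - 1), z k ^ (i k))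
    -- S̄(z) = z_d A + Q + z_d⁻¹ B
    (Sbar : (Fin d → ℂ) → ℂ)
    (hSbar : ∀ z, Sbar z =
      z ⟨d - 1, by omega⟩ * AC z + QC z + (z ⟨d - 1, by omega⟩)⁻¹ * BC z)
    -- the Laurent polynomials B_j with S̄ = (z_j + z_j⁻¹) B_j + Q_j, B_j, Q_j
    -- not involving z_j
    (Bj Qj : Fin d → ((Fin d → ℂ) → ℂ))
    (hBjind : ∀ j : Fin d, (j : ℕ) < d - 1 → ∀ z c,
      Bj j (Function.update z j c) = Bj j z)
    (hQjind : ∀ j : Fin d, (j : ℕ) < d - 1 → ∀ z c,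
      Qj j (Function.update z j c) = Qj j z)
    (hBjQj : ∀ j : Fin d, (j : ℕ) < d - 1 → ∀ z : Fin d → ℂ, (∀ k, z k ≠ 0) →
      Sbar z = (z j + (z j)⁻¹) * Bj j z + Qj j z)
    -- the Laurent polynomials A'_j, A''_j, B'_j, B''_j, not involving z_j or z_d
    (A' A'' B' B'' : Fin d → ((Fin d → ℂ) → ℂ))
    (hA'ind : ∀ j : Fin d, (j : ℕ) < d - 1 → ∀ z c,
      A' j (Function.update z j c) = A' j z ∧
      A' j (Function.update z ⟨d - 1, by omega⟩ c) = A' j z)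
    (hA''ind : ∀ j : Fin d, (j : ℕ) < d - 1 → ∀ z c,
      A'' j (Function.update z j c) = A'' j z ∧
      A'' j (Function.update z ⟨d - 1, by omega⟩ c) = A'' j z)
    (hB'ind : ∀ j : Fin d, (j : ℕ) < d - 1 → ∀ z c,
      B' j (Function.update z j c) = B' j z ∧
      B' j (Function.update z ⟨d - 1, by omega⟩ c) = B' j z)
    (hB''ind : ∀ j : Fin d, (j : ℕ) < d - 1 → ∀ z c,
      B'' j (Function.update z j c) = B'' j z ∧
      B'' j (Function.update z ⟨d - 1, by omega⟩ c) = B'' j z)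
    (hAdec : ∀ j : Fin d, (j : ℕ) < d - 1 → ∀ z : Fin d → ℂ, (∀ k, z k ≠ 0) →
      AC z = (z j + (z j)⁻¹) * A' j z + A'' j z)
    (hBdec : ∀ j : Fin d, (j : ℕ) < d - 1 → ∀ z : Fin d → ℂ, (∀ k, z k ≠ 0) →
      BC z = (z j + (z j)⁻¹) * B' j z + B'' j z)
    -- the point p
    (p : Fin d → ℂ)
    (hpj : ∀ j : Fin d, (j : ℕ) < d - 1 → (p j = 1 ∨ p j = -1))
    (hpA : AC p ≠ 0)
    (hpd0 : p ⟨d - 1, by omega⟩ ≠ 0)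
    (hpd : (p ⟨d - 1, by omega⟩) ^ 2 = BC p / AC p)
    -- S̃(θ) = S̄ evaluated at (p_1 e^{iθ_1}, …, p_d e^{iθ_d})
    (St : (Fin d → ℝ) → ℂ)
    (hSt : ∀ θ : Fin d → ℝ, St θ =
      p ⟨d - 1, by omega⟩ * Complex.exp (Complex.I * (θ ⟨d - 1, by omega⟩ : ℂ)) *
          AC (fun k => p k * Complex.exp (Complex.I * (θ k : ℂ)))
        + QC (fun k => p k * Complex.exp (Complex.I * (θ k : ℂ)))
        + (p ⟨d - 1, by omega⟩)⁻¹ *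
            Complex.exp (-(Complex.I * (θ ⟨d - 1, by omega⟩ : ℂ))) *
            BC (fun k => p k * Complex.exp (Complex.I * (θ k : ℂ)))) :
    -- first derivatives vanish
    (∀ j : Fin d, pderiv' d j St 0 = 0) ∧
    -- mixed second derivatives vanish
    (∀ j k : Fin d, j ≠ k → pderiv' d j (pderiv' d k St) 0 = 0) ∧
    -- pure second derivative in the last variable
    (pderiv' d ⟨d - 1, by omega⟩ (pderiv' d ⟨d - 1, by omega⟩ St) 0 =
      -2 * BC p / p ⟨d - 1, by omega⟩) ∧
    -- pure second derivatives in the other variables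
    (∀ j : Fin d, (j : ℕ) < d - 1 →
      pderiv' d j (pderiv' d j St) 0 = -2 * p j * Bj j p) ∧
    -- the third-order mixed derivatives
    (∀ j : Fin d, (j : ℕ) < d - 1 →
      pderiv' d ⟨d - 1, by omega⟩ (pderiv' d j (pderiv' d j St)) 0 =
        -2 * Complex.I * p j *
          (p ⟨d - 1, by omega⟩ * A' j p - (p ⟨d - 1, by omega⟩)⁻¹ * B' j p)) := by
  
  classical
  have hd1 : d - 1 < d := by omega
  set L : Fin d := ⟨d - 1, hd1⟩ with hLdef
  have hsplit : ∀ k : Fin d, (k : ℕ) < d - 1 ∨ k = L := by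
    intro k
    by_cases h : (k : ℕ) < d - 1
    · exact Or.inl h
    · right
      have hk := k.isLt
      exact Fin.ext (by simp only [hLdef]; omega)
  have hjneL : ∀ j : Fin d, (j : ℕ) < d - 1 → j ≠ L := by
    intro j hj h
    rw [h] at hj
    simp only [hLdef] at hj
    omega
  have hpne : ∀ k, p k ≠ 0 := by
    intro k
    rcases hsplit k with h | h
    · rcases hpj k h with h1 | h1 <;> simp [h1]
    · rw [h]; exact hpd0
  have hpinv : ∀ j : Fin d, (j : ℕ) < d - 1 → (p j)⁻¹ = p j := by
    intro j hj
    rcases hpj j hj with h | h <;> simp [h, inv_neg]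
  set zf : (Fin d → ℝ) → (Fin d → ℂ) :=
    fun θ k => p k * Complex.exp (Complex.I * (θ k : ℂ)) with hzf
  have hzne : ∀ θ k, zf θ k ≠ 0 := fun θ k =>
    mul_ne_zero (hpne k) (Complex.exp_ne_zero _)
  have hz0 : zf 0 = p := by
    funext k; simp [hzf]
  have hzupd : ∀ (θ : Fin d → ℝ) (j : Fin d) (s : ℝ),
      (fun k => p k * Complex.exp (Complex.I * ((Function.update θ j s k : ℝ) : ℂ)))
        = Function.update (zf θ) j (p j * Complex.exp (Complex.I * (s : ℂ))) := by
    intro θ j s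
    funext k
    by_cases h : k = j
    · subst h; simp [hzf]
    · simp [hzf, Function.update_of_ne h]
  have hzupd' : ∀ (θ : Fin d → ℝ) (j : Fin d) (s : ℝ),
      zf (Function.update θ j s)
        = Function.update (zf θ) j (p j * Complex.exp (Complex.I * (s : ℂ))) := by
    intro θ j s
    exact hzupd θ j s
  
  -- AC, QC, BC do not depend on the last coordinate
  have prodind : ∀ (z : Fin d → ℂ) (c : ℂ) (i : Fin d → ℤ),
      (∏ k ∈ Finset.univ.filter (fun k : Fin d => (k : ℕ) < d - 1),
        (Function.update z L c) k ^ (i k))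
      = ∏ k ∈ Finset.univ.filter (fun k : Fin d => (k : ℕ) < d - 1), z k ^ (i k) := by
    intro z c i
    refine Finset.prod_congr rfl ?_
    intro k hk
    simp only [Finset.mem_filter] at hk
    have hne : k ≠ L := by
      intro h
      rw [h] at hk
      simp only [hLdef] at hk
      omega
    rw [Function.update_of_ne hne]
  have ACind : ∀ z c, AC (Function.update z L c) = AC z := by
    intro z c
    rw [hAC, hAC]
    exact Finset.sum_congr rfl fun i _ => by rw [prodind]
  have QCind : ∀ z c, QC (Function.update z L c) = QC z := by
    intro z c
    rw [hQC, hQC]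
    exact Finset.sum_congr rfl fun i _ => by rw [prodind]
  have BCind : ∀ z c, BC (Function.update z L c) = BC z := by
    intro z c
    rw [hBC, hBC]
    exact Finset.sum_congr rfl fun i _ => by rw [prodind]
  -- derivative helpers
  have hE : ∀ s : ℝ, HasDerivAt (fun t : ℝ => Complex.exp (Complex.I * (t : ℂ)))
      (Complex.I * Complex.exp (Complex.I * (s : ℂ))) s := by
    intro s
    have h1 : HasDerivAt (fun t : ℝ => Complex.I * (t : ℂ)) Complex.I s := by
      simpa using (Complex.ofRealCLM.hasDerivAt (x := s)).const_mul Complex.I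
    simpa [mul_comm] using h1.cexp
  have hE' : ∀ s : ℝ, HasDerivAt (fun t : ℝ => Complex.exp (-(Complex.I * (t : ℂ))))
      (-(Complex.I * Complex.exp (-(Complex.I * (s : ℂ))))) s := by
    intro s
    have h1 : HasDerivAt (fun t : ℝ => -(Complex.I * (t : ℂ))) (-Complex.I) s := by
      have := (Complex.ofRealCLM.hasDerivAt (x := s)).const_mul Complex.I
      simpa using (Complex.ofRealCLM.hasDerivAt (x := s)).const_mul (-Complex.I)
    have := h1.cexp
    convert this using 1
    ring
  -- St in terms of Sbar
  have hStz : ∀ θ, St θ = Sbar (zf θ) := by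
    intro θ
    rw [hSt, hSbar]
    have h1 : zf θ L = p L * Complex.exp (Complex.I * ((θ L : ℝ) : ℂ)) := rfl
    have h2 : (zf θ L)⁻¹ = (p L)⁻¹ * Complex.exp (-(Complex.I * ((θ L : ℝ) : ℂ))) := by
      rw [h1, mul_inv, ← Complex.exp_neg]
    rw [h1, h2]
  -- the key balance relation at p
  have hkey : p L * AC p = (p L)⁻¹ * BC p := by
    have h : p L ^ 2 * AC p = BC p := by
      rw [hpd]
      field_simp
    field_simp
    linear_combination h
  
  -- first derivative in direction j < d-1
  have keyj : ∀ j : Fin d, (j : ℕ) < d - 1 → ∀ θ : Fin d → ℝ,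
      pderiv' d j St θ =
        p j * (Complex.I * Complex.exp (Complex.I * ((θ j : ℝ) : ℂ))
             - Complex.I * Complex.exp (-(Complex.I * ((θ j : ℝ) : ℂ)))) * Bj j (zf θ) := by
    intro j hj θ
    have hfun : ∀ s : ℝ, St (Function.update θ j s)
        = p j * (Complex.exp (Complex.I * (s : ℂ)) + Complex.exp (-(Complex.I * (s : ℂ))))
            * Bj j (zf θ) + Qj j (zf θ) := by
      intro s
      rw [hStz, hzupd' θ j s]
      set c := p j * Complex.exp (Complex.I * (s : ℂ)) with hc
      have hne : ∀ k, (Function.update (zf θ) j c) k ≠ 0 := by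
        intro k
        by_cases h : k = j
        · rw [h, Function.update_self]
          exact mul_ne_zero (hpne j) (Complex.exp_ne_zero _)
        · rw [Function.update_of_ne h]
          exact hzne θ k
      rw [hBjQj j hj _ hne, hBjind j hj, hQjind j hj, Function.update_self]
      have hcinv : c⁻¹ = p j * Complex.exp (-(Complex.I * (s : ℂ))) := by
        rw [hc, mul_inv, hpinv j hj, ← Complex.exp_neg]
      rw [hcinv, hc]
      ring
    have hder : HasDerivAt (fun s : ℝ =>
        p j * (Complex.exp (Complex.I * (s : ℂ)) + Complex.exp (-(Complex.I * (s : ℂ))))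
          * Bj j (zf θ) + Qj j (zf θ))
        (p j * (Complex.I * Complex.exp (Complex.I * ((θ j : ℝ) : ℂ))
             - Complex.I * Complex.exp (-(Complex.I * ((θ j : ℝ) : ℂ)))) * Bj j (zf θ)) (θ j) := by
      have h := ((((hE (θ j)).add (hE' (θ j))).const_mul (p j)).mul_const
        (Bj j (zf θ))).add_const (Qj j (zf θ))
      refine h.congr_deriv (Eq.symm ?_)
      ring
    unfold pderiv'
    rw [show (fun s : ℝ => St (Function.update θ j s)) = _ from funext hfun]
    exact hder.deriv
  -- first derivative in the last direction
  have keyL : ∀ θ : Fin d → ℝ, pderiv' d L St θ =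
      Complex.I * (p L * AC (zf θ) * Complex.exp (Complex.I * ((θ L : ℝ) : ℂ))
        - (p L)⁻¹ * BC (zf θ) * Complex.exp (-(Complex.I * ((θ L : ℝ) : ℂ)))) := by
    intro θ
    have hfun : ∀ t : ℝ, St (Function.update θ L t)
        = p L * AC (zf θ) * Complex.exp (Complex.I * (t : ℂ))
          + QC (zf θ)
          + (p L)⁻¹ * BC (zf θ) * Complex.exp (-(Complex.I * (t : ℂ))) := by
      intro t
      rw [hSt, hzupd θ L t, ACind, QCind, BCind, Function.update_self]
      push_cast
      ring
    have hder : HasDerivAt (fun t : ℝ =>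
        p L * AC (zf θ) * Complex.exp (Complex.I * (t : ℂ))
          + QC (zf θ)
          + (p L)⁻¹ * BC (zf θ) * Complex.exp (-(Complex.I * (t : ℂ))))
        (Complex.I * (p L * AC (zf θ) * Complex.exp (Complex.I * ((θ L : ℝ) : ℂ))
          - (p L)⁻¹ * BC (zf θ) * Complex.exp (-(Complex.I * ((θ L : ℝ) : ℂ))))) (θ L) := by
      have h := (((hE (θ L)).const_mul (p L * AC (zf θ))).add_const (QC (zf θ))).fun_add
        ((hE' (θ L)).const_mul ((p L)⁻¹ * BC (zf θ)))
      refine h.congr_deriv (Eq.symm ?_)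
      ring
    unfold pderiv'
    rw [show (fun t : ℝ => St (Function.update θ L t)) = _ from funext hfun]
    exact hder.deriv
  -- second derivative in direction j < d-1
  have key2j : ∀ j : Fin d, (j : ℕ) < d - 1 → ∀ θ : Fin d → ℝ,
      pderiv' d j (pderiv' d j St) θ =
        -(p j * (Complex.exp (Complex.I * ((θ j : ℝ) : ℂ))
          + Complex.exp (-(Complex.I * ((θ j : ℝ) : ℂ)))) * Bj j (zf θ)) := by
    intro j hj θ
    have hfun : ∀ s : ℝ, pderiv' d j St (Function.update θ j s)
        = p j * (Complex.I * Complex.exp (Complex.I * (s : ℂ))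
             - Complex.I * Complex.exp (-(Complex.I * (s : ℂ)))) * Bj j (zf θ) := by
      intro s
      rw [keyj j hj, Function.update_self, hzupd' θ j s, hBjind j hj]
    have hder : HasDerivAt (fun s : ℝ =>
        p j * (Complex.I * Complex.exp (Complex.I * (s : ℂ))
             - Complex.I * Complex.exp (-(Complex.I * (s : ℂ)))) * Bj j (zf θ))
        (-(p j * (Complex.exp (Complex.I * ((θ j : ℝ) : ℂ))
          + Complex.exp (-(Complex.I * ((θ j : ℝ) : ℂ)))) * Bj j (zf θ))) (θ j) := by
      have h := (((((hE (θ j)).const_mul Complex.I).fun_sub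
        ((hE' (θ j)).const_mul Complex.I)).const_mul (p j)).mul_const (Bj j (zf θ)))
      refine h.congr_deriv (Eq.symm ?_)
      linear_combination (-(p j * Bj j (zf θ)) * (Complex.exp (Complex.I * ((θ j : ℝ) : ℂ))
        + Complex.exp (-(Complex.I * ((θ j : ℝ) : ℂ))))) * Complex.I_mul_I
    show deriv (fun s : ℝ => pderiv' d j St (Function.update θ j s)) (θ j) = _
    rw [funext hfun]
    exact hder.deriv
  
  -- extraction of Bj, A', B' values by evaluating at z_j = 2 and z_j = 1
  have hupd_ne : ∀ (z : Fin d → ℂ), (∀ k, z k ≠ 0) → ∀ (j : Fin d) (c : ℂ), c ≠ 0 →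
      ∀ k, Function.update z j c k ≠ 0 := by
    intro z hz j c hc k
    by_cases h : k = j
    · rw [h, Function.update_self]; exact hc
    · rw [Function.update_of_ne h]; exact hz k
  have hBjval : ∀ j : Fin d, (j : ℕ) < d - 1 → ∀ z : Fin d → ℂ, (∀ k, z k ≠ 0) →
      Bj j z = 2 * (Sbar (Function.update z j 2) - Sbar (Function.update z j 1)) := by
    intro j hj z hz
    have e2 := hBjQj j hj _ (hupd_ne z hz j 2 two_ne_zero)
    have e1 := hBjQj j hj _ (hupd_ne z hz j 1 one_ne_zero)
    rw [Function.update_self, hBjind j hj, hQjind j hj] at e2 e1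
    rw [e2, e1]
    ring
  have hA'val : ∀ j : Fin d, (j : ℕ) < d - 1 → ∀ z : Fin d → ℂ, (∀ k, z k ≠ 0) →
      A' j z = 2 * (AC (Function.update z j 2) - AC (Function.update z j 1)) := by
    intro j hj z hz
    have e2 := hAdec j hj _ (hupd_ne z hz j 2 two_ne_zero)
    have e1 := hAdec j hj _ (hupd_ne z hz j 1 one_ne_zero)
    rw [Function.update_self, (hA'ind j hj z 2).1, (hA''ind j hj z 2).1] at e2
    rw [Function.update_self, (hA'ind j hj z 1).1, (hA''ind j hj z 1).1] at e1
    rw [e2, e1]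
    ring
  have hB'val : ∀ j : Fin d, (j : ℕ) < d - 1 → ∀ z : Fin d → ℂ, (∀ k, z k ≠ 0) →
      B' j z = 2 * (BC (Function.update z j 2) - BC (Function.update z j 1)) := by
    intro j hj z hz
    have e2 := hBdec j hj _ (hupd_ne z hz j 2 two_ne_zero)
    have e1 := hBdec j hj _ (hupd_ne z hz j 1 one_ne_zero)
    rw [Function.update_self, (hB'ind j hj z 2).1, (hB''ind j hj z 2).1] at e2
    rw [Function.update_self, (hB'ind j hj z 1).1, (hB''ind j hj z 1).1] at e1
    rw [e2, e1]
    ring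
  refine ⟨?_, ?_, ?_, ?_, ?_⟩
  · -- first derivatives vanish
    intro j
    rcases hsplit j with hj | hj
    · rw [keyj j hj 0]
      simp
    · rw [hj, keyL 0, hz0]
      simp only [Pi.zero_apply, Complex.ofReal_zero, mul_zero, neg_zero, Complex.exp_zero,
        mul_one]
      rw [hkey]
      ring
  · -- mixed second derivatives vanish
    intro j k hjk
    rcases hsplit k with hk | hk
    · -- inner direction k < d - 1
      have hval : ∀ s : ℝ, pderiv' d k St (Function.update 0 j s) = 0 := by
        intro s
        rw [keyj k hk]
        have h0 : Function.update (0 : Fin d → ℝ) j s k = 0 :=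
          Function.update_of_ne (Ne.symm hjk) _ _
        rw [h0]
        simp
      show deriv (fun s : ℝ => pderiv' d k St (Function.update 0 j s)) ((0 : Fin d → ℝ) j) = 0
      rw [funext hval]
      simp
    · -- inner direction is the last one; then j < d - 1
      rw [hk] at hjk ⊢
      have hj : (j : ℕ) < d - 1 := by
        rcases hsplit j with h | h
        · exact h
        · exact absurd h hjk
      have hval : ∀ s : ℝ, pderiv' d L St (Function.update 0 j s)
          = p j * (Complex.exp (Complex.I * (s : ℂ)) + Complex.exp (-(Complex.I * (s : ℂ))))
              * (Complex.I * (p L * A' j p - (p L)⁻¹ * B' j p))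
            + Complex.I * (p L * A'' j p - (p L)⁻¹ * B'' j p) := by
        intro s
        rw [keyL]
        have h0 : Function.update (0 : Fin d → ℝ) j s L = 0 :=
          Function.update_of_ne (Ne.symm hjk) _ _
        rw [h0, hzupd' 0 j s, hz0]
        set c := p j * Complex.exp (Complex.I * (s : ℂ)) with hc
        have hcne : c ≠ 0 := mul_ne_zero (hpne j) (Complex.exp_ne_zero _)
        have hne := hupd_ne p hpne j c hcne
        rw [hAdec j hj _ hne, hBdec j hj _ hne, Function.update_self,
          (hA'ind j hj p c).1, (hA''ind j hj p c).1, (hB'ind j hj p c).1, (hB''ind j hj p c).1]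
        have hcinv : c⁻¹ = p j * Complex.exp (-(Complex.I * (s : ℂ))) := by
          rw [hc, mul_inv, hpinv j hj, ← Complex.exp_neg]
        rw [hcinv, hc]
        simp only [Complex.ofReal_zero, mul_zero, neg_zero, Complex.exp_zero, mul_one]
        ring
      show deriv (fun s : ℝ => pderiv' d L St (Function.update 0 j s)) ((0 : Fin d → ℝ) j) = 0
      rw [funext hval]
      have hder := ((((hE 0).fun_add (hE' 0)).const_mul (p j)).mul_const
        (Complex.I * (p L * A' j p - (p L)⁻¹ * B' j p))).add_const
        (Complex.I * (p L * A'' j p - (p L)⁻¹ * B'' j p))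
      simp only [Pi.zero_apply]
      rw [hder.deriv]
      simp
  · -- pure second derivative in the last variable
    have hval : ∀ t : ℝ, pderiv' d L St (Function.update 0 L t)
        = Complex.I * (p L * AC p) * Complex.exp (Complex.I * (t : ℂ))
          - Complex.I * ((p L)⁻¹ * BC p) * Complex.exp (-(Complex.I * (t : ℂ))) := by
      intro t
      rw [keyL, Function.update_self, hzupd' 0 L t, hz0, ACind, BCind]
      ring
    show deriv (fun t : ℝ => pderiv' d L St (Function.update 0 L t)) ((0 : Fin d → ℝ) L)
      = -2 * BC p / p L
    rw [funext hval]
    have hder := ((hE 0).const_mul (Complex.I * (p L * AC p))).fun_sub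
      ((hE' 0).const_mul (Complex.I * ((p L)⁻¹ * BC p)))
    simp only [Pi.zero_apply]
    rw [hder.deriv]
    simp only [Complex.ofReal_zero, mul_zero, neg_zero, Complex.exp_zero, mul_one]
    linear_combination (-1 : ℂ) * hkey
      + (p L * AC p + (p L)⁻¹ * BC p) * Complex.I_mul_I
  · -- pure second derivatives in the other directions
    intro j hj
    rw [key2j j hj 0, hz0]
    simp only [Pi.zero_apply, Complex.ofReal_zero, mul_zero, neg_zero, Complex.exp_zero]
    ring
  · -- third-order derivatives
    intro j hj
    have hLj : L ≠ j := Ne.symm (hjneL j hj)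
    have hval : ∀ t : ℝ, pderiv' d j (pderiv' d j St) (Function.update 0 L t)
        = ((-(4 * p j * p L * (AC (Function.update p j 2) - AC (Function.update p j 1))))
            * Complex.exp (Complex.I * (t : ℂ))
          + (-(4 * p j * (QC (Function.update p j 2) - QC (Function.update p j 1)))))
          + (-(4 * p j * (p L)⁻¹ * (BC (Function.update p j 2) - BC (Function.update p j 1))))
            * Complex.exp (-(Complex.I * (t : ℂ))) := by
      intro t
      have hθ : Function.update (0 : Fin d → ℝ) L t j = 0 :=
        Function.update_of_ne (hjneL j hj) _ _
      rw [key2j j hj, hθ, hzupd' 0 L t, hz0]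
      set ww := p L * Complex.exp (Complex.I * (t : ℂ)) with hww
      have hwne : ww ≠ 0 := mul_ne_zero hpd0 (Complex.exp_ne_zero _)
      have hzt : ∀ k, Function.update p L ww k ≠ 0 := hupd_ne p hpne L ww hwne
      rw [hBjval j hj _ hzt, hSbar, hSbar]
      have hcomm : ∀ c : ℂ, Function.update (Function.update p L ww) j c
          = Function.update (Function.update p j c) L ww := by
        intro c
        exact Function.update_comm hLj ww c p
      rw [hcomm 2, hcomm 1, Function.update_self, Function.update_self,
        ACind, ACind, QCind, QCind, BCind, BCind]
      have hwwinv : ww⁻¹ = (p L)⁻¹ * Complex.exp (-(Complex.I * (t : ℂ))) := by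
        rw [hww, mul_inv, ← Complex.exp_neg]
      rw [hwwinv, hww]
      simp only [Complex.ofReal_zero, mul_zero, neg_zero, Complex.exp_zero]
      ring
    show deriv (fun t : ℝ => pderiv' d j (pderiv' d j St) (Function.update 0 L t))
      ((0 : Fin d → ℝ) L) = -2 * Complex.I * p j * (p L * A' j p - (p L)⁻¹ * B' j p)
    rw [funext hval]
    have hder := (((hE 0).const_mul
        (-(4 * p j * p L * (AC (Function.update p j 2) - AC (Function.update p j 1))))).add_const
        (-(4 * p j * (QC (Function.update p j 2) - QC (Function.update p j 1))))).fun_add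
      ((hE' 0).const_mul
        (-(4 * p j * (p L)⁻¹ * (BC (Function.update p j 2) - BC (Function.update p j 1)))))
    simp only [Pi.zero_apply]
    rw [hder.deriv]
    simp only [Complex.ofReal_zero, mul_zero, neg_zero, Complex.exp_zero, mul_one]
    rw [hA'val j hj p hpne, hB'val j hj p hpne]
    ring
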